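/- Let δ be the derivation of A = C[x,y] with δ(x) = x and δ(y) = 1. Then the only nonzero δ-prime ideal of A is xA; hence the Poisson prime spectrum of C[x,y,z] with bracket {y,z}=−1, {z,x}=x, {x,y}=0 is exactly {0, xC[x,y,z]}. -/

import Mathlib

open Polynomial

/-- A Poisson bracket on a commutative `ℂ`-algebra `B`. -/
structure IsPoissonBracket {B : Type*} [CommRing B] [Algebra ℂ B]
    (br : B → B → B) : Prop where
  add_left : ∀ a b c : B, br (a + b) c = br a c + br b c
  smul_left : ∀ (r : ℂ) (a b : B), br (r • a) b = r • br a b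
  antisymm : ∀ a b : B, br a b = - br b a
  jacobi : ∀ a b c : B, br a (br b c) + br b (br c a) + br c (br a b) = 0
  leibniz : ∀ a b c : B, br a (b * c) = br a b * c + b * br a c

/-- The Poisson bracket `{-,-}_δ` on `A[z]`: zero on `A` and `{z,a} = δ a`. -/
def IsDeltaBracket {A : Type*} [CommRing A] [Algebra ℂ A] (δ : Derivation ℂ A A)
    (br : Polynomial A → Polynomial A → Polynomial A) : Prop :=
  IsPoissonBracket br ∧ (∀ a b : A, br (Polynomial.C a) (Polynomial.C b) = 0) ∧
    (∀ a : A, br Polynomial.X (Polynomial.C a) = Polynomial.C (δ a))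

/-- `I` is a Poisson ideal for the bracket `br`. -/
def IsPoissonIdeal {B : Type*} [CommRing B] (br : B → B → B) (I : Ideal B) : Prop :=
  ∀ b : B, ∀ i ∈ I, br b i ∈ I

/-- `I` is a `δ`-ideal. -/
def IsDeltaIdeal {A : Type*} [CommRing A] [Algebra ℂ A] (δ : Derivation ℂ A A)
    (I : Ideal A) : Prop :=
  ∀ a ∈ I, δ a ∈ I

/-- `P` is a `δ`-prime ideal. -/
def IsDeltaPrime {A : Type*} [CommRing A] [Algebra ℂ A] (δ : Derivation ℂ A A)
    (P : Ideal A) : Prop :=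
  P ≠ ⊤ ∧ IsDeltaIdeal δ P ∧
    ∀ I J : Ideal A, IsDeltaIdeal δ I → IsDeltaIdeal δ J → I * J ≤ P → I ≤ P ∨ J ≤ P

noncomputable section AuxTT

/-- coefficientwise application of an additive map to a polynomial -/
noncomputable def cmap {R S : Type*} [Semiring R] [Semiring S] (φ : R →+ S) (f : R[X]) : S[X] :=
  ⟨AddMonoidAlgebra.ofCoeff (Finsupp.mapRange φ (map_zero φ) f.toFinsupp.coeff)⟩

@[simp] lemma coeff_cmap {R S : Type*} [Semiring R] [Semiring S] (φ : R →+ S) (f : R[X]) (n : ℕ) :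
    (cmap φ f).coeff n = φ (f.coeff n) := by
  rcases f with ⟨f⟩
  simp [cmap, coeff_ofFinsupp, coeff]

lemma cmap_add {R S : Type*} [Semiring R] [Semiring S] (φ : R →+ S) (f g : R[X]) :
    cmap φ (f + g) = cmap φ f + cmap φ g := by
  refine Polynomial.ext fun n => ?_
  simp [coeff_cmap]

abbrev TT := Polynomial (Polynomial ℂ)

/-- The operator `x ∂x + ∂y` on `ℂ[y][x]`. -/
noncomputable def Dop (f : TT) : TT :=
  derivative f * X + cmap (derivative (R := ℂ)).toAddMonoidHom f

lemma coeff_Dop (f : TT) (n : ℕ) :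
    (Dop f).coeff n = C (n : ℂ) * f.coeff n + derivative (f.coeff n) := by
  rcases n with _ | n
  · simp [Dop]
  · simp only [Dop, coeff_add, coeff_mul_X, coeff_derivative, coeff_cmap,
      LinearMap.toAddMonoidHom_coe]
    rw [mul_comm]
    congr 2
    push_cast
    simp [map_add, map_natCast]

lemma Dop_add (f g : TT) : Dop (f + g) = Dop f + Dop g := by
  refine Polynomial.ext fun n => ?_
  simp only [coeff_Dop, coeff_add, map_add]
  ring


/-- The operator `c ↦ c' + μ c` on `ℂ[y]`. -/
noncomputable def op (μ : ℂ) (c : Polynomial ℂ) : Polynomial ℂ :=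
  derivative c + C μ * c

@[simp] lemma op_zero_arg (μ : ℂ) : op μ 0 = 0 := by simp [op]

lemma op_zero_eq_derivative : op 0 = fun c => derivative c := by
  funext c; simp [op]

lemma op_coeff_natDegree (μ : ℂ) (c : Polynomial ℂ) :
    (op μ c).coeff c.natDegree = μ * c.leadingCoeff := by
  rw [op, coeff_add, coeff_C_mul, coeff_derivative, coeff_natDegree_succ_eq_zero, zero_mul,
    zero_add, leadingCoeff]

lemma op_ne (μ : ℂ) (hμ : μ ≠ 0) (c : Polynomial ℂ) (hc : c ≠ 0) :
    op μ c ≠ 0 ∧ (op μ c).natDegree = c.natDegree := by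
  have hcoeff : (op μ c).coeff c.natDegree ≠ 0 := by
    rw [op_coeff_natDegree]
    exact mul_ne_zero hμ (leadingCoeff_ne_zero.mpr hc)
  have hne : op μ c ≠ 0 := fun h => hcoeff (by simp [h])
  refine ⟨hne, le_antisymm ?_ (le_natDegree_of_ne_zero hcoeff)⟩
  refine (natDegree_add_le _ _).trans (max_le ((natDegree_derivative_le c).trans (Nat.sub_le _ _)) (natDegree_C_mul_le _ _))

lemma op_iter_ne (μ : ℂ) (hμ : μ ≠ 0) (c : Polynomial ℂ) (hc : c ≠ 0) (N : ℕ) :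
    (op μ)^[N] c ≠ 0 := by
  induction N generalizing c with
  | zero => simpa
  | succ N ih =>
    rw [Function.iterate_succ_apply]
    exact ih _ (op_ne μ hμ c hc).1

/-- coefficients of the iterated operator `Dop - μ₁` -/
lemma coeff_iterate_step (μ₁ : ℂ) (N : ℕ) (f : TT) (n : ℕ) :
    ((fun h => Dop h - C (C μ₁) * h)^[N] f).coeff n = (op ((n : ℂ) - μ₁))^[N] (f.coeff n) := by
  induction N generalizing f with
  | zero => simp
  | succ N ih =>
    rw [Function.iterate_succ_apply, Function.iterate_succ_apply, ih]
    congr 1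
    simp only [coeff_sub, coeff_Dop, coeff_C_mul, op, map_sub]
    ring

lemma step_mem (Q : Ideal TT) (hQ : ∀ f ∈ Q, Dop f ∈ Q) (μ₁ : ℂ) {f : TT} (hf : f ∈ Q) (N : ℕ) :
    (fun h => Dop h - C (C μ₁) * h)^[N] f ∈ Q := by
  induction N generalizing f with
  | zero => simpa
  | succ N ih =>
    rw [Function.iterate_succ_apply]
    exact ih (Q.sub_mem (hQ f hf) (Q.mul_mem_left _ hf))

lemma key0 (Q : Ideal TT) (hQ : ∀ f ∈ Q, Dop f ∈ Q) (i : ℕ) :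
    ∀ (m : ℕ) (c : Polynomial ℂ), c.natDegree ≤ m → c ≠ 0 →
      C c * X ^ i ∈ Q → (X : TT) ^ i ∈ Q := by
  intro m
  induction m with
  | zero =>
    intro c hdeg hc hmem
    obtain ⟨r, hr⟩ := natDegree_eq_zero.mp (Nat.le_zero.mp hdeg)
    have hr0 : r ≠ 0 := fun h => hc (by rw [← hr, h, map_zero])
    have := Q.mul_mem_left (C (C r⁻¹)) hmem
    rwa [← mul_assoc, ← C_mul, ← hr, ← C_mul, inv_mul_cancel₀ hr0, map_one, map_one,
      one_mul] at this
  | succ m ih =>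
    intro c hdeg hc hmem
    rcases Nat.lt_or_ge c.natDegree (m + 1) with h | h
    · exact ih c (Nat.lt_succ_iff.mp h) hc hmem
    have hd0 : c.natDegree ≠ 0 := by omega
    have hstep := step_mem Q hQ (i : ℂ) hmem 1
    have heq : (fun h => Dop h - C (C (i:ℂ)) * h)^[1] (C c * X ^ i) = C (derivative c) * X ^ i := by
      refine Polynomial.ext fun n => ?_
      rw [coeff_iterate_step]
      simp only [coeff_C_mul, coeff_X_pow]
      by_cases hn : n = i
      · subst hn; simp [op]
      · simp [hn]
    rw [heq] at hstep
    have hdc : derivative c ≠ 0 := by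
      intro h0
      exact hd0 (natDegree_eq_zero_of_derivative_eq_zero h0)
    exact ih (derivative c) (by have := natDegree_derivative_lt hd0; omega) hdc hstep

lemma key (Q : Ideal TT) (hQ : ∀ f ∈ Q, Dop f ∈ Q) :
    ∀ (m : ℕ) (f : TT), f.support.card ≤ m → f ∈ Q → ∀ i ∈ f.support, (X : TT) ^ i ∈ Q := by
  intro m
  induction m with
  | zero =>
    intro f hcard _ i hi
    rw [Nat.le_zero, Finset.card_eq_zero] at hcard
    simp [hcard] at hi
  | succ m ih =>
    intro f hcard hf i hi
    by_cases hex : ∃ i₁ ∈ f.support, i₁ ≠ i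
    · obtain ⟨i₁, hi₁, hne⟩ := hex
      set N := (f.coeff i₁).natDegree + 1 with hN
      set g := (fun h => Dop h - C (C (i₁ : ℂ)) * h)^[N] f with hg
      have hgQ : g ∈ Q := step_mem Q hQ _ hf N
      have hcoeffg : ∀ n, g.coeff n = (op ((n : ℂ) - (i₁ : ℂ)))^[N] (f.coeff n) :=
        fun n => coeff_iterate_step _ _ _ _
      have hsub : g.support ⊆ f.support.erase i₁ := by
        intro n hn
        rw [mem_support_iff] at hn
        rw [Finset.mem_erase, mem_support_iff]
        constructor
        · rintro rfl
          apply hn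
          rw [hcoeffg, sub_self, op_zero_eq_derivative]
          exact iterate_derivative_eq_zero (by omega)
        · intro h0
          exact hn (by rw [hcoeffg, h0]; simp [Function.iterate_fixed])
      have hig : i ∈ g.support := by
        rw [mem_support_iff, hcoeffg]
        apply op_iter_ne
        · intro h
          exact hne (Nat.cast_injective (by linear_combination -h : (i₁ : ℂ) = (i : ℂ)))
        · exact mem_support_iff.mp hi
      have hcardg : g.support.card ≤ m := by
        have h1 : g.support.card ≤ (f.support.erase i₁).card := Finset.card_le_card hsub
        have h2 : (f.support.erase i₁).card < f.support.card := Finset.card_erase_lt_of_mem hi₁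
        omega
      exact ih g hcardg hgQ i hig
    · push_neg at hex
      have hfeq : f = C (f.coeff i) * X ^ i := by
        refine Polynomial.ext fun n => ?_
        simp only [coeff_C_mul, coeff_X_pow]
        by_cases hn : n = i
        · subst hn; simp
        · simp only [hn, if_false, mul_zero]
          by_contra h0
          exact hn (hex n (mem_support_iff.mpr h0))
      exact key0 Q hQ i (f.coeff i).natDegree (f.coeff i) le_rfl (mem_support_iff.mp hi)
        (hfeq ▸ hf)

lemma zero_lemma (Q : Ideal TT) (hQtop : Q ≠ ⊤)
    (h1 : ∀ f ∈ Q, derivative f ∈ Q)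
    (h2 : ∀ f ∈ Q, cmap (derivative (R := ℂ)).toAddMonoidHom f ∈ Q) :
    ∀ f ∈ Q, f = 0 := by
  have hC : ∀ (m : ℕ) (c : Polynomial ℂ), c.natDegree ≤ m → (C c : TT) ∈ Q → c = 0 := by
    intro m
    induction m with
    | zero =>
      intro c hdeg hc
      obtain ⟨r, hr⟩ := natDegree_eq_zero.mp (Nat.le_zero.mp hdeg)
      by_contra h0
      have hr0 : r ≠ 0 := fun h => h0 (by rw [← hr, h, map_zero])
      apply hQtop
      rw [Ideal.eq_top_iff_one]
      have := Q.mul_mem_left (C (C r⁻¹)) hc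
      rwa [← map_mul, ← hr, ← C_mul, inv_mul_cancel₀ hr0, map_one, map_one] at this
    | succ m ih =>
      intro c hdeg hc
      rcases Nat.lt_or_ge c.natDegree (m + 1) with h | h
      · exact ih c (Nat.lt_succ_iff.mp h) hc
      have hd0 : c.natDegree ≠ 0 := by omega
      have hc' : (C (derivative c) : TT) ∈ Q := by
        have := h2 _ hc
        have heq : cmap (derivative (R := ℂ)).toAddMonoidHom (C c : TT) = C (derivative c) := by
          refine Polynomial.ext fun n => ?_
          simp only [coeff_cmap, LinearMap.toAddMonoidHom_coe, coeff_C]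
          split <;> simp
        rwa [heq] at this
      have := ih (derivative c) (by have := natDegree_derivative_lt hd0; omega) hc'
      exact absurd (natDegree_eq_zero_of_derivative_eq_zero this) hd0
  have H : ∀ (n : ℕ) (f : TT), f.natDegree = n → f ∈ Q → f = 0 := by
    intro n
    induction n using Nat.strong_induction_on with
    | _ n ih =>
      intro f hn hf
      rcases Nat.eq_zero_or_pos n with rfl | hpos
      · obtain ⟨c, hc⟩ := natDegree_eq_zero.mp hn
        rw [← hc] at hf ⊢
        rw [hC c.natDegree c le_rfl hf, map_zero]
      · have hdf : derivative f ∈ Q := h1 f hf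
        have hlt : (derivative f).natDegree < n := hn ▸ natDegree_derivative_lt (by omega)
        have h0 := ih _ hlt _ rfl hdf
        have := natDegree_eq_zero_of_derivative_eq_zero h0
        omega
  exact fun f hf => H _ f rfl hf

end AuxTT

noncomputable section AuxE

abbrev AA := MvPolynomial (Fin 2) ℂ

noncomputable def EE : AA ≃ₐ[ℂ] TT :=
  (MvPolynomial.finSuccEquiv ℂ 1).trans (Polynomial.mapAlgEquiv
    ((MvPolynomial.finSuccEquiv ℂ 0).trans
      (Polynomial.mapAlgEquiv (MvPolynomial.isEmptyAlgEquiv ℂ (Fin 0)))))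

lemma EE_X0 : EE (MvPolynomial.X 0) = (Polynomial.X : TT) := by
  simp [EE, MvPolynomial.finSuccEquiv_X_zero, Polynomial.coe_mapAlgEquiv, Polynomial.map_X]

lemma EE_X1 : EE (MvPolynomial.X 1) = Polynomial.C Polynomial.X := by
  have h2 : (MvPolynomial.finSuccEquiv ℂ 1) (MvPolynomial.X 1)
      = Polynomial.C (MvPolynomial.X 0) := by
    rw [← Fin.succ_zero_eq_one, MvPolynomial.finSuccEquiv_X_succ]
  simp [EE, h2, Polynomial.coe_mapAlgEquiv, MvPolynomial.finSuccEquiv_X_zero]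

lemma Dop_CC (r : ℂ) : Dop (Polynomial.C (Polynomial.C r)) = 0 := by
  refine Polynomial.ext fun n => ?_
  rw [coeff_Dop]
  by_cases hn : n = 0 <;> simp [Polynomial.coeff_C, hn]

lemma Dop_mul_X (g : TT) : Dop (g * Polynomial.X) = Dop g * Polynomial.X + g * Polynomial.X := by
  refine Polynomial.ext fun n => ?_
  rcases n with _ | n
  · simp [coeff_Dop]
  · simp only [coeff_Dop, coeff_add, coeff_mul_X]
    rw [Nat.cast_succ, map_add, map_one]
    ring

lemma Dop_mul_C (g : TT) (c : Polynomial ℂ) :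
    Dop (g * Polynomial.C c) = Dop g * Polynomial.C c + g * Polynomial.C (derivative c) := by
  refine Polynomial.ext fun n => ?_
  simp only [coeff_Dop, coeff_add, coeff_mul_C, derivative_mul]
  ring

lemma EE_deriv (δ : Derivation ℂ AA AA) (hx : δ (MvPolynomial.X 0) = MvPolynomial.X 0)
    (hy : δ (MvPolynomial.X 1) = 1) (f : AA) : EE (δ f) = Dop (EE f) := by
  induction f using MvPolynomial.induction_on with
  | C r =>
    have h0 : δ (MvPolynomial.C r) = 0 := by
      rw [← MvPolynomial.algebraMap_eq]; exact Derivation.map_algebraMap δ r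
    have h1 : EE (MvPolynomial.C r) = Polynomial.C (Polynomial.C r) := by
      rw [← MvPolynomial.algebraMap_eq]
      rw [AlgEquiv.commutes]
      rfl
    rw [h0, map_zero, h1, Dop_CC]
  | add p q hp hq =>
    rw [map_add, map_add, map_add, Dop_add, hp, hq]
  | mul_X p k hp =>
    fin_cases k
    · simp only [Fin.zero_eta, Fin.isValue]
      rw [Derivation.leibniz, hx, map_add, smul_eq_mul, smul_eq_mul, map_mul, map_mul,
        EE_X0, hp, Dop_mul_X]
      ring
    · simp only [Fin.mk_one, Fin.isValue]
      rw [Derivation.leibniz, hy, smul_eq_mul, smul_eq_mul, map_add, map_mul, map_mul, map_mul,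
        EE_X1, hp, map_one, mul_one, Dop_mul_C]
      simp only [derivative_X, map_one, mul_one]
      ring

end AuxE

section Part1

/-- `P` is a `δ`-ideal. (duplicate of statement defs for scratch) -/
def IsDeltaIdeal' {A : Type*} [CommRing A] [Algebra ℂ A] (δ : Derivation ℂ A A)
    (I : Ideal A) : Prop :=
  ∀ a ∈ I, δ a ∈ I

def IsDeltaPrime' {A : Type*} [CommRing A] [Algebra ℂ A] (δ : Derivation ℂ A A)
    (P : Ideal A) : Prop :=
  P ≠ ⊤ ∧ IsDeltaIdeal' δ P ∧
    ∀ I J : Ideal A, IsDeltaIdeal' δ I → IsDeltaIdeal' δ J → I * J ≤ P → I ≤ P ∨ J ≤ P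

lemma prime_x : Prime (MvPolynomial.X 0 : AA) := by
  rw [← MulEquiv.prime_iff EE.toRingEquiv.toMulEquiv]
  have : EE.toRingEquiv.toMulEquiv (MvPolynomial.X 0) = (Polynomial.X : TT) := EE_X0
  rw [this]
  exact Polynomial.prime_X

lemma x_ne_zero : (MvPolynomial.X 0 : AA) ≠ 0 := MvPolynomial.X_ne_zero _

variable (δ : Derivation ℂ AA AA)

lemma delta_span_x (hx : δ (MvPolynomial.X 0) = MvPolynomial.X 0) :
    IsDeltaIdeal' δ (Ideal.span {MvPolynomial.X 0}) := by
  intro a ha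
  rw [Ideal.mem_span_singleton] at ha ⊢
  obtain ⟨b, rfl⟩ := ha
  rw [Derivation.leibniz, smul_eq_mul, smul_eq_mul, hx]
  exact dvd_add (Dvd.intro _ rfl) (Dvd.intro _ (mul_comm _ _))

lemma delta_mul {I J : Ideal AA} (hI : IsDeltaIdeal' δ I) (hJ : IsDeltaIdeal' δ J) :
    IsDeltaIdeal' δ (I * J) := by
  intro a ha
  refine Submodule.mul_induction_on ha ?_ ?_
  · intro m hm n hn
    rw [Derivation.leibniz, smul_eq_mul, smul_eq_mul]
    refine add_mem (Ideal.mul_mem_mul hm (hJ n hn)) ?_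
    rw [mul_comm n (δ m)]
    exact Ideal.mul_mem_mul (hI m hm) hn
  · intro x y hx hy
    rw [map_add]
    exact add_mem hx hy

lemma delta_pow {I : Ideal AA} (hI : IsDeltaIdeal' δ I) (n : ℕ) (hn : n ≠ 0) :
    IsDeltaIdeal' δ (I ^ n) := by
  induction n with
  | zero => omega
  | succ n ih =>
    rcases Nat.eq_zero_or_pos n with rfl | hpos
    · simpa using hI
    · rw [pow_succ]
      exact delta_mul δ (ih (by omega)) hI

lemma span_le_of_pow_le {P : Ideal AA} (hP : IsDeltaPrime' δ P)
    (hx : δ (MvPolynomial.X 0) = MvPolynomial.X 0) :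
    ∀ n : ℕ, n ≠ 0 → Ideal.span {MvPolynomial.X 0} ^ n ≤ P →
      Ideal.span {MvPolynomial.X 0} ≤ P := by
  intro n
  induction n with
  | zero => omega
  | succ n ih =>
    intro _ hle
    rcases Nat.eq_zero_or_pos n with rfl | hpos
    · simpa using hle
    · rw [pow_succ] at hle
      rcases hP.2.2 _ _ (delta_pow δ (delta_span_x δ hx) n (by omega)) (delta_span_x δ hx)
        hle with h | h
      · exact ih (by omega) h
      · exact h

lemma part1 (hx : δ (MvPolynomial.X 0) = MvPolynomial.X 0)
    (hy : δ (MvPolynomial.X 1) = 1) (P : Ideal AA) :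
    (IsDeltaPrime' δ P ∧ P ≠ ⊥) ↔ P = Ideal.span {MvPolynomial.X 0} := by
  constructor
  · rintro ⟨⟨hne_top, hdel, hpr⟩, hne_bot⟩
    set Q : Ideal TT := P.comap EE.symm.toRingEquiv.toRingHom with hQdef
    have hmemQ : ∀ f : TT, f ∈ Q ↔ EE.symm f ∈ P := fun f => Iff.rfl
    have hQ : ∀ f ∈ Q, Dop f ∈ Q := by
      intro f hf
      rw [hmemQ]
      have h1 : Dop f = EE (δ (EE.symm f)) := by
        rw [EE_deriv δ hx hy (EE.symm f), AlgEquiv.apply_symm_apply]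
      rw [h1, AlgEquiv.symm_apply_apply]
      exact hdel _ ((hmemQ f).mp hf)
    have hEEmem : ∀ p : AA, p ∈ P → EE p ∈ Q := by
      intro p hp
      rw [hmemQ, AlgEquiv.symm_apply_apply]
      exact hp
    have hcoeff0 : ∀ p ∈ P, (EE p).coeff 0 = 0 := by
      intro p hp
      by_contra h0
      have h1 := key Q hQ (EE p).support.card (EE p) le_rfl (hEEmem p hp) 0
        (Polynomial.mem_support_iff.mpr h0)
      rw [pow_zero, hmemQ, map_one] at h1
      exact hne_top (Ideal.eq_top_iff_one P |>.mpr h1)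
    have hPle : P ≤ Ideal.span {MvPolynomial.X 0} := by
      intro p hp
      obtain ⟨h, hh⟩ := Polynomial.X_dvd_iff.mpr (hcoeff0 p hp)
      rw [Ideal.mem_span_singleton]
      refine ⟨EE.symm h, ?_⟩
      have h2 := congrArg EE.symm hh
      rw [AlgEquiv.symm_apply_apply, map_mul] at h2
      have h3 : EE.symm (Polynomial.X : TT) = MvPolynomial.X 0 := by
        rw [← EE_X0, AlgEquiv.symm_apply_apply]
      rw [h2, h3]
    obtain ⟨p, hp, hpne⟩ := Submodule.ne_bot_iff P |>.mp hne_bot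
    have hEEp : EE p ≠ 0 := fun h => hpne (by
      have := congrArg EE.symm h
      rwa [AlgEquiv.symm_apply_apply, map_zero] at this)
    obtain ⟨i, hi⟩ := Polynomial.support_nonempty.mpr hEEp
    have hXi : (Polynomial.X : TT) ^ i ∈ Q :=
      key Q hQ (EE p).support.card (EE p) le_rfl (hEEmem p hp) i hi
    have hxi : (MvPolynomial.X 0 : AA) ^ i ∈ P := by
      have := (hmemQ _).mp hXi
      rwa [map_pow, ← EE_X0, AlgEquiv.symm_apply_apply] at this
    have hine : i ≠ 0 := by
      rintro rfl
      exact (Polynomial.mem_support_iff.mp hi) (hcoeff0 p hp)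
    have hpow : Ideal.span {MvPolynomial.X 0} ^ i ≤ P := by
      rw [Ideal.span_singleton_pow, Ideal.span_le, Set.singleton_subset_iff]
      exact hxi
    exact le_antisymm hPle (span_le_of_pow_le δ ⟨hne_top, hdel, hpr⟩ hx i hine hpow)
  · rintro rfl
    have hprime : (Ideal.span {MvPolynomial.X 0} : Ideal AA).IsPrime :=
      (Ideal.span_singleton_prime x_ne_zero).mpr prime_x
    refine ⟨⟨hprime.ne_top, delta_span_x δ hx, fun I J _ _ hIJ => hprime.mul_le.mp hIJ⟩, ?_⟩
    intro h
    exact x_ne_zero (Ideal.span_singleton_eq_bot.mp h)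

end Part1

section Part2

abbrev BB := Polynomial AA

variable (δ : Derivation ℂ AA AA) (br : BB → BB → BB)
variable (hadd : ∀ a b c : BB, br (a + b) c = br a c + br b c)
variable (hanti : ∀ a b : BB, br a b = - br b a)
variable (hleib : ∀ a b c : BB, br a (b * c) = br a b * c + b * br a c)
variable (hCC : ∀ a b : AA, br (Polynomial.C a) (Polynomial.C b) = 0)
variable (hXC : ∀ a : AA, br Polynomial.X (Polynomial.C a) = Polynomial.C (δ a))

section BrLemmas
include hadd

lemma br_zero_left (p : BB) : br 0 p = 0 := by
  have h := hadd 0 0 p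
  rw [add_zero] at h
  exact (left_eq_add.mp h)

include hanti

lemma br_zero_right (p : BB) : br p 0 = 0 := by
  rw [hanti, br_zero_left br hadd, neg_zero]

lemma br_add_right (a b c : BB) : br a (b + c) = br a b + br a c := by
  rw [hanti, hadd, neg_add, ← hanti, ← hanti]

lemma br_XX : br Polynomial.X Polynomial.X = 0 :=
  CharZero.eq_neg_self_iff.mp (hanti _ _)

include hleib hCC hXC

lemma br_C_left (a : AA) (f : BB) :
    br (Polynomial.C a) f = -(Polynomial.C (δ a) * derivative f) := by
  induction f using Polynomial.induction_on with
  | C b => rw [hCC, derivative_C, mul_zero, neg_zero]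
  | add p q hp hq =>
    rw [br_add_right br hadd hanti, hp, hq, derivative_add, mul_add, neg_add]
  | monomial n b hmono =>
    have he : (Polynomial.C b * Polynomial.X ^ (n + 1) : BB)
        = (Polynomial.C b * Polynomial.X ^ n) * Polynomial.X := by ring
    rw [he, hleib, hmono, hanti (Polynomial.C a) Polynomial.X, hXC]
    simp only [derivative_mul, derivative_X, derivative_C]
    ring

lemma br_C_right (a : AA) (f : BB) :
    br f (Polynomial.C a) = Polynomial.C (δ a) * derivative f := by
  rw [hanti, br_C_left δ br hadd hanti hleib hCC hXC, neg_neg]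

end BrLemmas

/-- coefficientwise δ on `BB` -/
noncomputable def Lδ : BB → BB := cmap δ.toLinearMap.toAddMonoidHom

lemma Lδ_C (a : AA) : Lδ δ (Polynomial.C a) = Polynomial.C (δ a) := by
  refine Polynomial.ext fun n => ?_
  simp only [Lδ, coeff_cmap, LinearMap.toAddMonoidHom_coe, Derivation.coeFn_coe,
    Polynomial.coeff_C]
  split <;> simp

lemma Lδ_mul_X (f : BB) : Lδ δ (f * Polynomial.X) = Lδ δ f * Polynomial.X := by
  refine Polynomial.ext fun n => ?_
  rcases n with _ | n <;>
    simp [Lδ, coeff_cmap, coeff_mul_X, coeff_mul_X_zero]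

section BrX
include hadd hanti hleib hCC hXC

lemma br_X_left (f : BB) : br Polynomial.X f = Lδ δ f := by
  induction f using Polynomial.induction_on with
  | C b => rw [hXC, Lδ_C]
  | add p q hp hq =>
    rw [br_add_right br hadd hanti, hp, hq]
    exact (cmap_add _ _ _).symm
  | monomial n b hmono =>
    have he : (Polynomial.C b * Polynomial.X ^ (n + 1) : BB)
        = (Polynomial.C b * Polynomial.X ^ n) * Polynomial.X := by ring
    rw [he, hleib, hmono, br_XX br hadd hanti, mul_zero, add_zero, Lδ_mul_X]

end BrX

end Part2

section ThetaMap

noncomputable def ay : Polynomial ℂ →ₐ[ℂ] AA := Polynomial.aeval (MvPolynomial.X 1)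

lemma ay_C (c : ℂ) : ay (Polynomial.C c) = algebraMap ℂ AA c := by
  simp [ay]

lemma ay_X : ay Polynomial.X = MvPolynomial.X 1 := by
  simp [ay]

noncomputable def θmap : TT →+* BB := Polynomial.mapRingHom (ay : Polynomial ℂ →+* AA)

lemma θ_C (r : Polynomial ℂ) : θmap (Polynomial.C r) = Polynomial.C (ay r) :=
  Polynomial.map_C _

lemma θ_X : θmap (Polynomial.X : TT) = Polynomial.X := Polynomial.map_X _

lemma θ_coeff (u : TT) (n : ℕ) : (θmap u).coeff n = ay (u.coeff n) :=
  Polynomial.coeff_map _ _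

lemma θ_derivative (u : TT) : θmap (derivative u) = derivative (θmap u) :=
  (Polynomial.derivative_map u _).symm

variable (δ : Derivation ℂ AA AA)

lemma delta_ay (hy : δ (MvPolynomial.X 1) = 1) (r : Polynomial ℂ) :
    δ (ay r) = ay (derivative r) := by
  induction r using Polynomial.induction_on with
  | C c =>
    rw [ay_C, Derivation.map_algebraMap, derivative_C, map_zero]
  | add p q hp hq => rw [map_add, map_add, hp, hq, derivative_add, map_add]
  | monomial n c h =>
    have he : (Polynomial.C c * Polynomial.X ^ (n + 1) : Polynomial ℂ)
        = (Polynomial.C c * Polynomial.X ^ n) * Polynomial.X := by ring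
    rw [he, map_mul, Derivation.leibniz, smul_eq_mul, smul_eq_mul, ay_X, hy, h]
    simp only [derivative_mul, derivative_X, derivative_C, map_add, map_mul, ay_X, mul_one,
      zero_mul, map_zero, zero_add]
    ring

lemma θ_Lδ (hy : δ (MvPolynomial.X 1) = 1) (u : TT) :
    Lδ δ (θmap u) = θmap (cmap (derivative (R := ℂ)).toAddMonoidHom u) := by
  refine Polynomial.ext fun n => ?_
  rw [θ_coeff]
  simp only [Lδ, coeff_cmap, LinearMap.toAddMonoidHom_coe, Derivation.coeFn_coe, θ_coeff]
  exact delta_ay δ hy _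

lemma decompA : ∀ a : AA, ∃ (r : Polynomial ℂ) (h : AA), a = ay r + MvPolynomial.X 0 * h := by
  intro a
  induction a using MvPolynomial.induction_on with
  | C c =>
    exact ⟨Polynomial.C c, 0, by
      rw [ay_C, MvPolynomial.algebraMap_eq, mul_zero, add_zero]⟩
  | add p q hp hq =>
    obtain ⟨rp, hp', hpe⟩ := hp
    obtain ⟨rq, hq', hqe⟩ := hq
    exact ⟨rp + rq, hp' + hq', by rw [hpe, hqe, map_add]; ring⟩
  | mul_X p k hp =>
    obtain ⟨r, h, he⟩ := hp
    fin_cases k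
    · exact ⟨0, p, by simp [mul_comm]⟩
    · refine ⟨r * Polynomial.X, h * MvPolynomial.X 1, ?_⟩
      simp only [Fin.mk_one, Fin.isValue]
      rw [he, map_mul, ay_X]
      ring

lemma decompB : ∀ f : BB, ∃ (u : TT) (g : BB),
    f = θmap u + Polynomial.C (MvPolynomial.X 0) * g := by
  intro f
  induction f using Polynomial.induction_on with
  | C a =>
    obtain ⟨r, h, he⟩ := decompA a
    exact ⟨Polynomial.C r, Polynomial.C h, by
      rw [he, map_add, map_mul, θ_C]⟩
  | add p q hp hq =>
    obtain ⟨up, gp, hpe⟩ := hp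
    obtain ⟨uq, gq, hqe⟩ := hq
    exact ⟨up + uq, gp + gq, by rw [hpe, hqe, map_add]; ring⟩
  | monomial n b hm =>
    obtain ⟨u, g, he⟩ := hm
    refine ⟨u * Polynomial.X, g * Polynomial.X, ?_⟩
    have he2 : (Polynomial.C b * Polynomial.X ^ (n + 1) : BB)
        = (Polynomial.C b * Polynomial.X ^ n) * Polynomial.X := by ring
    rw [he2, he, map_mul, θ_X]
    ring

end ThetaMap


theorem stmt_19
    (δ : Derivation ℂ (MvPolynomial (Fin 2) ℂ) (MvPolynomial (Fin 2) ℂ))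
    (hx : δ (MvPolynomial.X 0) = MvPolynomial.X 0) (hy : δ (MvPolynomial.X 1) = 1)
    (br : Polynomial (MvPolynomial (Fin 2) ℂ) → Polynomial (MvPolynomial (Fin 2) ℂ) →
      Polynomial (MvPolynomial (Fin 2) ℂ))
    (hbr : IsDeltaBracket δ br) :
    (∀ P : Ideal (MvPolynomial (Fin 2) ℂ),
        (IsDeltaPrime δ P ∧ P ≠ ⊥) ↔ P = Ideal.span {MvPolynomial.X 0}) ∧
      {P : Ideal (Polynomial (MvPolynomial (Fin 2) ℂ)) | P.IsPrime ∧ IsPoissonIdeal br P} =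
        {⊥, (Ideal.span {MvPolynomial.X 0}).map
          (Polynomial.C : MvPolynomial (Fin 2) ℂ →+* Polynomial (MvPolynomial (Fin 2) ℂ))} := by
  obtain ⟨hpb, hCC, hXC⟩ := hbr
  have hadd := hpb.add_left
  have hanti := hpb.antisymm
  have hleib := hpb.leibniz
  have hpart1 : ∀ P : Ideal (MvPolynomial (Fin 2) ℂ),
      (IsDeltaPrime δ P ∧ P ≠ ⊥) ↔ P = Ideal.span {MvPolynomial.X 0} := by
    intro P
    constructor
    · rintro ⟨⟨h1, h2, h3⟩, h4⟩
      exact (part1 δ hx hy P).mp ⟨⟨h1, h2, h3⟩, h4⟩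
    · intro h
      obtain ⟨⟨h1, h2, h3⟩, h4⟩ := (part1 δ hx hy P).mpr h
      exact ⟨⟨h1, h2, h3⟩, h4⟩
  refine ⟨hpart1, ?_⟩
  have hM : (Ideal.span {MvPolynomial.X 0}).map
      (Polynomial.C : MvPolynomial (Fin 2) ℂ →+* Polynomial (MvPolynomial (Fin 2) ℂ))
      = Ideal.span {Polynomial.C (MvPolynomial.X 0)} := by
    rw [Ideal.map_span, Set.image_singleton]
  ext Q
  simp only [Set.mem_setOf_eq, Set.mem_insert_iff, Set.mem_singleton_iff, hM]
  constructor
  · rintro ⟨hQp, hQpo⟩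
    have hder : ∀ f ∈ Q, derivative f ∈ Q := by
      intro f hf
      have h1 := hQpo (Polynomial.C (MvPolynomial.X 1)) f hf
      rw [br_C_left δ br hadd hanti hleib hCC hXC, hy, map_one, one_mul] at h1
      simpa using Q.neg_mem h1
    have hLd : ∀ f ∈ Q, Lδ δ f ∈ Q := by
      intro f hf
      have h1 := hQpo Polynomial.X f hf
      rwa [br_X_left δ br hadd hanti hleib hCC hXC] at h1
    set Q0 : Ideal (MvPolynomial (Fin 2) ℂ) :=
      Q.comap (Polynomial.C : MvPolynomial (Fin 2) ℂ →+* Polynomial (MvPolynomial (Fin 2) ℂ))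
      with hQ0def
    haveI := hQp
    have hQ0prime : Q0.IsPrime := Ideal.IsPrime.comap _
    have hQ0delta : ∀ a ∈ Q0, δ a ∈ Q0 := by
      intro a ha
      have h2 := hQpo Polynomial.X (Polynomial.C a) ha
      rwa [hXC] at h2
    by_cases hbot : Q0 = ⊥
    · left
      refine (Submodule.eq_bot_iff Q).mpr ?_
      have H : ∀ (n : ℕ) (f : Polynomial (MvPolynomial (Fin 2) ℂ)),
          f.natDegree = n → f ∈ Q → f = 0 := by
        intro n
        induction n using Nat.strong_induction_on with
        | _ n ih =>
          intro f hn hf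
          rcases Nat.eq_zero_or_pos n with rfl | hpos
          · obtain ⟨a, ha⟩ := Polynomial.natDegree_eq_zero.mp hn
            have ha2 : a ∈ Q0 := by
              rw [hQ0def, Ideal.mem_comap, ha]
              exact hf
            rw [hbot, Ideal.mem_bot] at ha2
            rw [← ha, ha2, map_zero]
          · have hdf := hder f hf
            have hlt : (derivative f).natDegree < n :=
              hn ▸ Polynomial.natDegree_derivative_lt (by omega)
            have h0 := ih _ hlt _ rfl hdf
            have := Polynomial.natDegree_eq_zero_of_derivative_eq_zero h0
            omega
      exact fun f hf => H _ f rfl hf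
    · right
      have hQ0dp : IsDeltaPrime δ Q0 := by
        refine ⟨?_, hQ0delta, fun I J _ _ h => hQ0prime.mul_le.mp h⟩
        intro h
        apply hQp.ne_top
        rw [Ideal.eq_top_iff_one] at h ⊢
        have h2 : Polynomial.C (1 : MvPolynomial (Fin 2) ℂ) ∈ Q := h
        rwa [map_one] at h2
      have hQ0eq : Q0 = Ideal.span {MvPolynomial.X 0} := (hpart1 Q0).mp ⟨hQ0dp, hbot⟩
      have hCx : Polynomial.C (MvPolynomial.X 0) ∈ Q := by
        have h3 : MvPolynomial.X 0 ∈ Q0 := hQ0eq ▸ Ideal.subset_span (Set.mem_singleton _)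
        exact h3
      refine le_antisymm ?_ ?_
      · intro f hf
        obtain ⟨u, g, rfl⟩ := decompB f
        have hθu : θmap u ∈ Q := by
          have h2 : Polynomial.C (MvPolynomial.X 0) * g ∈ Q := Ideal.mul_mem_right _ _ hCx
          have h3 := Q.sub_mem hf h2
          simpa using h3
        have hQ' : ∀ v ∈ Q.comap θmap, derivative v ∈ Q.comap θmap := by
          intro v hv
          show θmap (derivative v) ∈ Q
          rw [θ_derivative]
          exact hder _ hv
        have hQ'2 : ∀ v ∈ Q.comap θmap,
            cmap (derivative (R := ℂ)).toAddMonoidHom v ∈ Q.comap θmap := by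
          intro v hv
          show θmap _ ∈ Q
          rw [← θ_Lδ δ hy]
          exact hLd _ hv
        have hQ'top : Q.comap θmap ≠ ⊤ := by
          intro h
          apply hQp.ne_top
          rw [Ideal.eq_top_iff_one] at h ⊢
          have h2 : θmap 1 ∈ Q := h
          rwa [map_one] at h2
        have hu0 : u = 0 := zero_lemma _ hQ'top hQ' hQ'2 u hθu
        rw [hu0, map_zero, zero_add]
        exact Ideal.mem_span_singleton.mpr ⟨g, rfl⟩
      · rw [Ideal.span_le, Set.singleton_subset_iff]
        exact hCx
  · rintro (rfl | rfl)
    · refine ⟨Ideal.bot_prime, ?_⟩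
      intro b i hi
      rw [Ideal.mem_bot] at hi ⊢
      rw [hi]
      exact br_zero_right br hadd hanti b
    · constructor
      · rw [Ideal.span_singleton_prime (Polynomial.C_ne_zero.mpr x_ne_zero)]
        exact Polynomial.prime_C_iff.mpr prime_x
      · intro b i hi
        rw [Ideal.mem_span_singleton] at hi
        obtain ⟨g, rfl⟩ := hi
        rw [hleib]
        refine Ideal.add_mem _ ?_ ?_
        · rw [br_C_right δ br hadd hanti hleib hCC hXC, hx]
          exact Ideal.mul_mem_right _ _
            (Ideal.mul_mem_right _ _ (Ideal.subset_span (Set.mem_singleton _)))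
        · exact Ideal.mul_mem_right _ _ (Ideal.subset_span (Set.mem_singleton _))
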